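/- Let H be an infinite-dimensional Hilbert space and let P₀ ≤ P₁ ≤ ⋯ ≤ Pᵣ be orthogonal projections on H with rank(Pₛ − Pₛ₋₁) = 1 for 1 ≤ s ≤ r, and suppose the range of Pᵣ has infinite codimension (equivalently, the orthogonal complement of the range of Pᵣ is infinite-dimensional). Then for every ε > 0 there exist an orthogonal projection Q on H and positive integers m(0), …, m(r) such that ‖(Pᵣ Q Pᵣ)^{m(s)} − Pₛ‖ < ε for every 0 ≤ s ≤ r, where the norm is the operator norm. -/

import Mathlib

open scoped ComplexConjugate

section Rk
variable {𝕜 H : Type*} [RCLike 𝕜] [NormedAddCommGroup H] [InnerProductSpace 𝕜 H]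

local notation "⟪" x ", " y "⟫" => @inner 𝕜 _ _ x y

/-- Rank-one operator `x ↦ ⟪b, x⟫ • a`. -/
noncomputable def rk2 (𝕜 : Type*) {H : Type*} [RCLike 𝕜] [NormedAddCommGroup H]
    [InnerProductSpace 𝕜 H] (a b : H) : H →L[𝕜] H := (innerSL 𝕜 b).smulRight a

lemma rk2_apply (a b x : H) : rk2 𝕜 a b x = ⟪b, x⟫ • a := rfl

lemma rk2_mul_rk2 (a b c d : H) :
    (rk2 𝕜 a b : H →L[𝕜] H) * rk2 𝕜 c d = ⟪b, c⟫ • rk2 𝕜 a d := by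
  ext x
  simp [rk2_apply, ContinuousLinearMap.mul_apply, inner_smul_right, smul_smul, mul_comm]

lemma mul_rk2 (T : H →L[𝕜] H) (a b : H) : T * rk2 𝕜 a b = rk2 𝕜 (T a) b := by
  ext x; simp [rk2_apply, ContinuousLinearMap.mul_apply]

lemma rk2_mul (T : H →L[𝕜] H) (hT : ∀ x y : H, ⟪T x, y⟫ = ⟪x, T y⟫) (a b : H) :
    (rk2 𝕜 a b : H →L[𝕜] H) * T = rk2 𝕜 a (T b) := by
  ext x
  simp only [rk2_apply, ContinuousLinearMap.mul_apply]
  rw [← hT b x]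

lemma rk2_zero_left (b : H) : (rk2 𝕜 0 b : H →L[𝕜] H) = 0 := by
  ext x; simp [rk2_apply]

lemma rk2_zero_right (a : H) : (rk2 𝕜 a 0 : H →L[𝕜] H) = 0 := by
  ext x; simp [rk2_apply]

lemma rk2_smul_left (c : 𝕜) (a b : H) : (rk2 𝕜 (c • a) b : H →L[𝕜] H) = c • rk2 𝕜 a b := by
  ext x; simp [rk2_apply, smul_smul, mul_comm]

lemma rk2_smul_right (c : 𝕜) (a b : H) :
    (rk2 𝕜 a (c • b) : H →L[𝕜] H) = (conj c) • rk2 𝕜 a b := by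
  ext x; simp [rk2_apply, inner_smul_left, smul_smul]

lemma rk2_symm (a x y : H) : ⟪rk2 𝕜 a a x, y⟫ = ⟪x, rk2 𝕜 a a y⟫ := by
  simp [rk2_apply, inner_smul_left, inner_smul_right]
  ring

lemma norm_rk2_le_one (a : H) (ha : ‖a‖ = 1) : ‖(rk2 𝕜 a a : H →L[𝕜] H)‖ ≤ 1 := by
  refine ContinuousLinearMap.opNorm_le_bound _ zero_le_one fun x => ?_
  rw [rk2_apply, norm_smul, ha, mul_one, one_mul]
  simpa [ha] using norm_inner_le_norm (𝕜 := 𝕜) a x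

lemma isSelfAdjoint_rk2 [CompleteSpace H] (a : H) :
    IsSelfAdjoint (rk2 𝕜 a a : H →L[𝕜] H) :=
  ContinuousLinearMap.isSelfAdjoint_iff_isSymmetric.mpr (fun x y => rk2_symm a x y)

/-- A self-adjoint idempotent with one-dimensional range is a rank-one projection. -/
lemma exists_unit_rk2 (D : H →L[𝕜] H) (h2 : D * D = D)
    (hsym : ∀ x y : H, ⟪D x, y⟫ = ⟪x, D y⟫)
    (h1 : Module.finrank 𝕜 ↥(LinearMap.range (D : H →ₗ[𝕜] H)) = 1) :
    ∃ e : H, ‖e‖ = 1 ∧ D = rk2 𝕜 e e := by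
  obtain ⟨v, hv0, hv⟩ := finrank_eq_one_iff'.mp h1
  set u : H := (v : H) with hu
  have hu0 : u ≠ 0 := fun h => hv0 (Subtype.ext h)
  obtain ⟨w, hw⟩ := v.2
  have hDu : D u = u := by
    have : D (D w) = D w := by
      have := congrFun (congrArg (fun T : H →L[𝕜] H => (T : H → H)) h2) w
      simpa [ContinuousLinearMap.mul_apply] using this
    have hw' : D w = u := hw
    rwa [hw'] at this
  have hnu : (0:ℝ) < ‖u‖ := norm_pos_iff.mpr hu0
  set e : H := ((‖u‖ : 𝕜))⁻¹ • u with he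
  have hne : ‖e‖ = 1 := by
    rw [he, norm_smul]
    simp [norm_inv, RCLike.norm_ofReal, abs_of_pos hnu, inv_mul_cancel₀ hnu.ne']
  refine ⟨e, hne, ?_⟩
  have hDe : D e = e := by rw [he, map_smul, hDu]
  have hinner_eu : ⟪e, u⟫ = (‖u‖ : 𝕜) := by
    rw [he, inner_smul_left]
    rw [inner_self_eq_norm_sq_to_K (𝕜 := 𝕜)]
    simp only [map_inv₀, RCLike.conj_ofReal]
    rw [sq]
    rw [inv_mul_cancel_left₀ (by exact_mod_cast hnu.ne')]
  ext x
  obtain ⟨c, hc⟩ := hv ⟨D x, LinearMap.mem_range.mpr ⟨x, rfl⟩⟩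
  have hcx : D x = c • u := by
    have := congrArg (fun z : ↥(LinearMap.range (D : H →ₗ[𝕜] H)) => (z : H)) hc
    simpa using this.symm
  have hinner : ⟪e, x⟫ = c * (‖u‖ : 𝕜) := by
    calc ⟪e, x⟫ = ⟪D e, x⟫ := by rw [hDe]
    _ = ⟪e, D x⟫ := hsym e x
    _ = c * ⟪e, u⟫ := by rw [hcx, inner_smul_right]
    _ = c * (‖u‖ : 𝕜) := by rw [hinner_eu]
  rw [rk2_apply, hinner, hcx, he, smul_smul]
  rw [mul_assoc, mul_inv_cancel₀ (by exact_mod_cast hnu.ne'), mul_one]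

end Rk

lemma numeric_lemma (r : ℕ) {ε : ℝ} (hε : 0 < ε) :
    ∃ (lam : Fin r → ℝ) (m : Fin (r + 1) → ℕ),
      (∀ t, 0 ≤ lam t) ∧ (∀ t, lam t ≤ 1) ∧ (∀ s, 1 ≤ m s) ∧
      (∀ (s : Fin (r + 1)) (t : Fin r),
        |lam t ^ (m s) - (if (t : ℕ) < (s : ℕ) then (1:ℝ) else 0)| ≤ ε / (4 * (r + 1))) := by
  set ε' : ℝ := min (1/2) (ε / (4 * (r + 1))) with hε'def
  have hd : (0:ℝ) < ε / (4 * (r + 1)) := by positivity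
  have hε'0 : 0 < ε' := lt_min (by norm_num) hd
  have hε'half : ε' ≤ 1/2 := min_le_left _ _
  have hε'd : ε' ≤ ε / (4 * (r + 1)) := min_le_right _ _
  set β : ℝ := 1 - ε' with hβdef
  have hβ0 : 0 < β := by simp only [hβdef]; linarith
  have hβ1 : β < 1 := by simp only [hβdef]; linarith
  obtain ⟨n, hn⟩ := exists_pow_lt_of_lt_one hε'0 hβ1
  set N : ℕ := max n 1 with hNdef
  have hN1 : 1 ≤ N := le_max_right _ _
  have hβN : β ^ N < ε' := lt_of_le_of_lt (pow_le_pow_of_le_one hβ0.le hβ1.le (le_max_left _ _)) hn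
  have hNR : (1:ℝ) ≤ (N:ℝ) := by exact_mod_cast hN1
  refine ⟨fun t => β ^ (((N:ℝ) ^ ((t:ℕ) + 1)) / ((N:ℝ) ^ r)), fun s => N ^ (r - (s:ℕ)), ?_, ?_, ?_, ?_⟩
  · intro t; positivity
  · intro t
    apply Real.rpow_le_one hβ0.le hβ1.le
    positivity
  · intro s; exact Nat.one_le_pow _ _ (lt_of_lt_of_le Nat.zero_lt_one hN1)
  · intro s t
    have hsr : (s:ℕ) ≤ r := Nat.lt_succ_iff.mp s.isLt
    have htr : (t:ℕ) < r := t.isLt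
    have hpow : (β ^ (((N:ℝ) ^ ((t:ℕ) + 1)) / ((N:ℝ) ^ r))) ^ (N ^ (r - (s:ℕ)))
        = β ^ ((((N:ℝ) ^ ((t:ℕ) + 1)) / ((N:ℝ) ^ r)) * (N ^ (r - (s:ℕ)) : ℕ)) := by
      rw [← Real.rpow_natCast (β ^ (((N:ℝ) ^ ((t:ℕ) + 1)) / ((N:ℝ) ^ r))) (N ^ (r - (s:ℕ)))]
      rw [← Real.rpow_mul hβ0.le]
    set ex : ℝ := (((N:ℝ) ^ ((t:ℕ) + 1)) / ((N:ℝ) ^ r)) * (N ^ (r - (s:ℕ)) : ℕ) with hexdef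
    have hexeq : ex = ((N:ℝ) ^ ((t:ℕ) + 1 + (r - (s:ℕ)))) / ((N:ℝ) ^ r) := by
      rw [hexdef]
      push_cast
      rw [pow_add]
      ring
    have hNrpos : (0:ℝ) < (N:ℝ) ^ r := by positivity
    rw [hpow]
    by_cases hts : (t : ℕ) < (s : ℕ)
    · have hle : (t:ℕ) + 1 + (r - (s:ℕ)) ≤ r := by omega
      have hex1 : ex ≤ 1 := by
        rw [hexeq, div_le_one hNrpos]
        exact pow_le_pow_right₀ hNR hle
      have hex0 : 0 < ex := by
        rw [hexeq]; positivity
      have h1 : β ≤ β ^ ex := by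
        nth_rewrite 1 [← Real.rpow_one β]
        exact Real.rpow_le_rpow_of_exponent_ge hβ0 hβ1.le hex1
      have h2 : β ^ ex ≤ 1 := Real.rpow_le_one hβ0.le hβ1.le hex0.le
      rw [if_pos hts, abs_le]
      constructor <;> simp only [hβdef] at h1 h2 ⊢ <;> nlinarith [hε'd, hd]
    · have hge : r + 1 ≤ (t:ℕ) + 1 + (r - (s:ℕ)) := by omega
      have hexN : (N:ℝ) ≤ ex := by
        rw [hexeq, le_div_iff₀ hNrpos]
        calc (N:ℝ) * (N:ℝ) ^ r = (N:ℝ) ^ (r + 1) := by rw [pow_succ]; ring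
        _ ≤ (N:ℝ) ^ ((t:ℕ) + 1 + (r - (s:ℕ))) := pow_le_pow_right₀ hNR hge
      have h1 : β ^ ex ≤ β ^ (N:ℝ) := Real.rpow_le_rpow_of_exponent_ge hβ0 hβ1.le hexN
      have h2 : β ^ (N:ℝ) = β ^ N := Real.rpow_natCast β N
      have h3 : 0 < β ^ ex := Real.rpow_pos_of_pos hβ0 ex
      rw [if_neg hts, sub_zero, abs_of_pos h3]
      calc β ^ ex ≤ β ^ (N:ℝ) := h1
      _ = β ^ N := h2
      _ ≤ ε' := hβN.le
      _ ≤ ε / (4 * (r + 1)) := hε'd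

/-- `P` is an orthogonal projection: idempotent and self-adjoint. -/
def IsOrthoProj {𝕜 H : Type*} [RCLike 𝕜] [NormedAddCommGroup H]
    [InnerProductSpace 𝕜 H] [CompleteSpace H] (P : H →L[𝕜] H) : Prop :=
  P * P = P ∧ IsSelfAdjoint P

set_option maxHeartbeats 2000000 in
theorem lemma_two
    {𝕜 H : Type*} [RCLike 𝕜] [NormedAddCommGroup H] [InnerProductSpace 𝕜 H]
    [CompleteSpace H]
    (r : ℕ) (P : Fin (r + 1) → (H →L[𝕜] H))
    (hproj : ∀ s, IsOrthoProj (P s))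
    (hmono : ∀ s t, s ≤ t → P t * P s = P s)
    (hrank : ∀ s : Fin r,
      Module.finrank 𝕜
        ↥(LinearMap.range ((P s.succ - P s.castSucc : H →L[𝕜] H) : H →ₗ[𝕜] H)) = 1)
    (hcodim : ¬ FiniteDimensional 𝕜
      ↥((LinearMap.range ((P (Fin.last r) : H →L[𝕜] H) : H →ₗ[𝕜] H))ᗮ))
    (ε : ℝ) (hε : 0 < ε) :
    ∃ (Q : H →L[𝕜] H) (m : Fin (r + 1) → ℕ),
      IsOrthoProj Q ∧ (∀ s, 1 ≤ m s) ∧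
      (∀ s, ‖(P (Fin.last r) * Q * P (Fin.last r)) ^ (m s) - P s‖ < ε) := by
  classical
  have hsa : ∀ s, IsSelfAdjoint (P s) := fun s => (hproj s).2
  have hidem : ∀ s, P s * P s = P s := fun s => (hproj s).1
  have hsym : ∀ s, ∀ x y : H, @inner 𝕜 _ _ ((P s) x) y = @inner 𝕜 _ _ x ((P s) y) :=
    fun s => ContinuousLinearMap.isSelfAdjoint_iff_isSymmetric.mp (hsa s)
  have hmono' : ∀ s t, s ≤ t → P s * P t = P s := by
    intro s t h
    have := congrArg star (hmono s t h)
    rwa [star_mul, (hsa s).star_eq, (hsa t).star_eq] at this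
  have hmN : ∀ a b : Fin (r+1), (a:ℕ) ≤ (b:ℕ) → P b * P a = P a ∧ P a * P b = P a := by
    intro a b h
    exact ⟨hmono a b (Fin.le_def.mpr h), hmono' a b (Fin.le_def.mpr h)⟩
  have hDsym : ∀ t : Fin r, ∀ x y : H,
      @inner 𝕜 _ _ ((P t.succ - P t.castSucc) x) y
        = @inner 𝕜 _ _ x ((P t.succ - P t.castSucc) y) := by
    intro t x y
    simp only [ContinuousLinearMap.sub_apply, inner_sub_left, inner_sub_right,
      hsym t.succ x y, hsym t.castSucc x y]
  have hD2 : ∀ t : Fin r,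
      (P t.succ - P t.castSucc) * (P t.succ - P t.castSucc) = P t.succ - P t.castSucc := by
    intro t
    have h1 := (hmN t.castSucc t.succ (by simp [Fin.val_succ])).1
    have h2 := (hmN t.castSucc t.succ (by simp [Fin.val_succ])).2
    rw [sub_mul, mul_sub, mul_sub, hidem t.succ, hidem t.castSucc, h1, h2]
    abel
  have hDD : ∀ s t : Fin r, s ≠ t →
      (P s.succ - P s.castSucc) * (P t.succ - P t.castSucc) = 0 := by
    intro s t hst
    rcases lt_or_gt_of_ne hst with h | h
    · have hlt : (s:ℕ) < (t:ℕ) := Fin.lt_def.mp h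
      have h1 := (hmN s.succ t.succ (by simp [Fin.val_succ]; omega)).2
      have h2 := (hmN s.succ t.castSucc (by simp [Fin.val_succ]; omega)).2
      have h3 := (hmN s.castSucc t.succ (by simp [Fin.val_succ]; omega)).2
      have h4 := (hmN s.castSucc t.castSucc (by simp; omega)).2
      rw [sub_mul, mul_sub, mul_sub, h1, h2, h3, h4]
      abel
    · have hlt : (t:ℕ) < (s:ℕ) := Fin.lt_def.mp h
      have h1 := (hmN t.succ s.succ (by simp [Fin.val_succ]; omega)).1
      have h2 := (hmN t.castSucc s.succ (by simp [Fin.val_succ]; omega)).1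
      have h3 := (hmN t.succ s.castSucc (by simp [Fin.val_succ]; omega)).1
      have h4 := (hmN t.castSucc s.castSucc (by simp; omega)).1
      rw [sub_mul, mul_sub, mul_sub, h1, h2, h3, h4]
      abel
  have hP0D : ∀ t : Fin r, P 0 * (P t.succ - P t.castSucc) = 0 := by
    intro t
    have h1 := (hmN 0 t.succ (by simp)).2
    have h2 := (hmN 0 t.castSucc (by simp)).2
    rw [mul_sub, h1, h2, sub_self]
  have hPrD : ∀ t : Fin r, P (Fin.last r) * (P t.succ - P t.castSucc)
      = P t.succ - P t.castSucc := by
    intro t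
    have h1 := (hmN t.succ (Fin.last r) (by simp [Fin.val_succ, Fin.val_last]; try omega)).1
    have h2 := (hmN t.castSucc (Fin.last r) (by simp [Fin.val_last]; try omega)).1
    rw [mul_sub, h1, h2]
  -- extract unit vectors spanning the differences
  have hex : ∀ t : Fin r, ∃ e : H, ‖e‖ = 1 ∧ P t.succ - P t.castSucc = rk2 𝕜 e e :=
    fun t => exists_unit_rk2 _ (hD2 t) (hDsym t) (hrank t)
  choose e he1 heD using hex
  have heK : ∀ t : Fin r, @inner 𝕜 _ _ (e t) (e t) = 1 := by
    intro t
    rw [inner_self_eq_norm_sq_to_K, he1 t]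
    norm_num
  have hEe : ∀ t : Fin r, rk2 𝕜 (e t) (e t) (e t) = e t := by
    intro t
    rw [rk2_apply, heK t, one_smul]
  have hPre : ∀ t : Fin r, P (Fin.last r) (e t) = e t := by
    intro t
    have h := congrFun (congrArg (fun T : H →L[𝕜] H => (T : H → H)) (hPrD t)) (e t)
    simp only [ContinuousLinearMap.mul_apply] at h
    rwa [heD t, hEe t] at h
  have hP0e : ∀ t : Fin r, P 0 (e t) = 0 := by
    intro t
    have h := congrFun (congrArg (fun T : H →L[𝕜] H => (T : H → H)) (hP0D t)) (e t)
    simp only [ContinuousLinearMap.mul_apply, ContinuousLinearMap.zero_apply] at h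
    rwa [heD t, hEe t] at h
  have hee : ∀ s t : Fin r, s ≠ t → @inner 𝕜 _ _ (e s) (e t) = 0 := by
    intro s t hst
    have h0 : (P s.succ - P s.castSucc) ((P t.succ - P t.castSucc) (e t)) = 0 := by
      have h := congrFun (congrArg (fun T : H →L[𝕜] H => (T : H → H)) (hDD s t hst)) (e t)
      simpa [ContinuousLinearMap.mul_apply] using h
    calc @inner 𝕜 _ _ (e s) (e t)
        = @inner 𝕜 _ _ ((P s.succ - P s.castSucc) (e s)) (e t) := by
          conv_lhs => rw [← hEe s, ← heD s]
      _ = @inner 𝕜 _ _ (e s) ((P s.succ - P s.castSucc) (e t)) := hDsym s (e s) (e t)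
      _ = @inner 𝕜 _ _ (e s) ((P s.succ - P s.castSucc) ((P t.succ - P t.castSucc) (e t))) := by
          conv_lhs => rw [← hEe t, ← heD t]
      _ = 0 := by rw [h0, inner_zero_right]
  -- orthonormal family in the orthogonal complement of range (P last)
  set V : Submodule 𝕜 H :=
    (LinearMap.range ((P (Fin.last r) : H →L[𝕜] H) : H →ₗ[𝕜] H))ᗮ with hVdef
  have hrankV : ((r + 1 : ℕ) : Cardinal) ≤ Module.rank 𝕜 ↥V := by
    by_contra h
    push_neg at h
    have : Module.rank 𝕜 ↥V < Cardinal.aleph0 :=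
      lt_of_lt_of_le h (le_of_lt (Cardinal.nat_lt_aleph0 _))
    exact hcodim (Module.rank_lt_aleph0_iff.mp this)
  obtain ⟨w, hw⟩ := exists_linearIndependent_of_le_rank hrankV
  set g' : Fin (r + 1) → ↥V :=
    @InnerProductSpace.gramSchmidtNormed 𝕜 ↥V _ _ _ (Fin (r + 1)) _ _
      (inferInstance : WellFoundedLT (Fin (r + 1))) w with hg'def
  have hgs : Orthonormal 𝕜 g' :=
    @InnerProductSpace.gramSchmidtNormed_orthonormal 𝕜 ↥V _ _ _ (Fin (r + 1)) _ _
      (inferInstance : WellFoundedLT (Fin (r + 1))) w hw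
  set g : Fin r → H := fun t => ((g' t.castSucc : ↥V) : H) with hgdef
  have hgV : ∀ t : Fin r, g t ∈ V := fun t => (g' t.castSucc).2
  have hgnorm : ∀ t : Fin r, ‖g t‖ = 1 := fun t => hgs.1 t.castSucc
  have hgg : ∀ s t : Fin r, s ≠ t → @inner 𝕜 _ _ (g s) (g t) = 0 := by
    intro s t hst
    exact hgs.2 (fun hc => hst (Fin.castSucc_injective r hc))
  have hgK : ∀ t : Fin r, @inner 𝕜 _ _ (g t) (g t) = 1 := by
    intro t
    rw [inner_self_eq_norm_sq_to_K, hgnorm t]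
    norm_num
  have hrg : ∀ (t : Fin r) (x : H), @inner 𝕜 _ _ (P (Fin.last r) x) (g t) = 0 := by
    intro t x
    exact (Submodule.mem_orthogonal _ _).mp (hgV t) _ (LinearMap.mem_range.mpr ⟨x, rfl⟩)
  have hPrg : ∀ t : Fin r, P (Fin.last r) (g t) = 0 := by
    intro t
    rw [← inner_self_eq_zero (𝕜 := 𝕜)]
    calc @inner 𝕜 _ _ (P (Fin.last r) (g t)) (P (Fin.last r) (g t))
        = @inner 𝕜 _ _ (g t) (P (Fin.last r) (P (Fin.last r) (g t))) :=
          hsym _ (g t) _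
      _ = 0 := by
          rw [← inner_conj_symm, hrg t (P (Fin.last r) (g t)), map_zero]
  have hP0g : ∀ t : Fin r, P 0 (g t) = 0 := by
    intro t
    have h2 := (hmN 0 (Fin.last r) (by simp)).2
    have h := congrFun (congrArg (fun T : H →L[𝕜] H => (T : H → H)) h2) (g t)
    simp only [ContinuousLinearMap.mul_apply] at h
    rw [← h, hPrg t, map_zero]
  have heg : ∀ t u : Fin r, @inner 𝕜 _ _ (e t) (g u) = 0 := by
    intro t u
    rw [← hPre t]
    exact hrg u (e t)
  have hge : ∀ t u : Fin r, @inner 𝕜 _ _ (g u) (e t) = 0 := by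
    intro t u
    rw [← inner_conj_symm, heg t u, map_zero]
  -- numbers
  obtain ⟨lam, m, hlam0, hlam1, hm1, hclose⟩ := numeric_lemma r hε
  set c : Fin r → ℝ := fun t => Real.sqrt (lam t) with hcdef
  set d : Fin r → ℝ := fun t => Real.sqrt (1 - lam t) with hddef
  have hc2 : ∀ t, c t ^ 2 = lam t := fun t => Real.sq_sqrt (hlam0 t)
  have hd2 : ∀ t, d t ^ 2 = 1 - lam t := fun t => Real.sq_sqrt (by linarith [hlam1 t])
  set f : Fin r → H := fun t => ((c t : ℝ) : 𝕜) • e t + ((d t : ℝ) : 𝕜) • g t with hfdef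
  have hP0f : ∀ t, P 0 (f t) = 0 := by
    intro t
    simp [hfdef, map_add, map_smul, hP0e t, hP0g t]
  have hPrf : ∀ t, P (Fin.last r) (f t) = ((c t : ℝ) : 𝕜) • e t := by
    intro t
    simp [hfdef, map_add, map_smul, hPre t, hPrg t]
  have hff : ∀ t u : Fin r, @inner 𝕜 _ _ (f t) (f u) = if t = u then 1 else 0 := by
    intro t u
    by_cases htu : t = u
    · subst htu
      rw [if_pos rfl]
      simp only [hfdef, inner_add_left, inner_add_right, inner_smul_left, inner_smul_right,
        heK t, hgK t, heg t t, hge t t, RCLike.conj_ofReal]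
      rw [mul_one, mul_one, mul_zero, mul_zero, add_zero, zero_add]
      have : ((c t : ℝ) : 𝕜) * (c t : ℝ) + ((d t : ℝ) : 𝕜) * (d t : ℝ)
          = (((c t)^2 + (d t)^2 : ℝ) : 𝕜) := by
        push_cast
        ring
      rw [this, hc2 t, hd2 t]
      norm_num
    · rw [if_neg htu]
      simp only [hfdef, inner_add_left, inner_add_right, inner_smul_left, inner_smul_right,
        hee t u htu, hgg t u htu, heg t u, hge u t, RCLike.conj_ofReal]
      ring
  -- the projection Q
  set S : H →L[𝕜] H := ∑ t : Fin r, rk2 𝕜 (f t) (f t) with hSdef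
  set Q : H →L[𝕜] H := P 0 + S with hQdef
  have hP0S : P 0 * S = 0 := by
    rw [hSdef, Finset.mul_sum]
    apply Finset.sum_eq_zero
    intro t _
    rw [mul_rk2, hP0f t, rk2_zero_left]
  have hSP0 : S * P 0 = 0 := by
    rw [hSdef, Finset.sum_mul]
    apply Finset.sum_eq_zero
    intro t _
    rw [rk2_mul (P 0) (hsym 0), hP0f t, rk2_zero_right]
  have hSS : S * S = S := by
    rw [hSdef, Finset.sum_mul]
    apply Finset.sum_congr rfl
    intro t _
    rw [Finset.mul_sum]
    rw [Finset.sum_eq_single t]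
    · rw [rk2_mul_rk2, hff t t, if_pos rfl, one_smul]
    · intro u _ hut
      rw [rk2_mul_rk2, hff t u, if_neg (Ne.symm hut), zero_smul]
    · intro hnot
      exact absurd (Finset.mem_univ t) hnot
  have hQproj : IsOrthoProj Q := by
    constructor
    · rw [hQdef, add_mul, mul_add, mul_add, hidem 0, hP0S, hSP0, hSS]
      abel
    · rw [hQdef, hSdef]
      apply IsSelfAdjoint.add (hsa 0)
      rw [IsSelfAdjoint, star_sum]
      apply Finset.sum_congr rfl
      intro t _
      exact (isSelfAdjoint_rk2 (f t)).star_eq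
  -- computing A = P_r Q P_r
  have hclam : ∀ t : Fin r, ((c t : ℝ) : 𝕜) * ((c t : ℝ) : 𝕜) = ((lam t : ℝ) : 𝕜) := by
    intro t
    rw [← RCLike.ofReal_mul, ← sq, hc2 t]
  have hA : P (Fin.last r) * Q * P (Fin.last r)
      = P 0 + ∑ t : Fin r, ((lam t : ℝ) : 𝕜) • rk2 𝕜 (e t) (e t) := by
    rw [hQdef, hSdef, mul_add, add_mul]
    have h0 : P (Fin.last r) * P 0 * P (Fin.last r) = P 0 := by
      rw [(hmN 0 (Fin.last r) (by simp)).1, (hmN 0 (Fin.last r) (by simp)).2]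
    rw [h0, Finset.mul_sum, Finset.sum_mul]
    congr 1
    apply Finset.sum_congr rfl
    intro t _
    rw [mul_rk2, rk2_mul _ (hsym (Fin.last r)), hPrf t, rk2_smul_left, rk2_smul_right,
      RCLike.conj_ofReal, smul_smul, hclam t]
  -- powers of A
  have hpow : ∀ n : ℕ, 1 ≤ n → (P (Fin.last r) * Q * P (Fin.last r)) ^ n
      = P 0 + ∑ t : Fin r, ((lam t ^ n : ℝ) : 𝕜) • rk2 𝕜 (e t) (e t) := by
    intro n hn
    induction n, hn using Nat.le_induction with
    | base =>
      rw [pow_one, hA]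
      simp
    | succ n hn ih =>
      rw [pow_succ, ih, hA, add_mul, mul_add, mul_add, hidem 0]
      have hz1 : P 0 * (∑ t : Fin r, ((lam t : ℝ) : 𝕜) • rk2 𝕜 (e t) (e t)) = 0 := by
        rw [Finset.mul_sum]
        apply Finset.sum_eq_zero
        intro t _
        rw [mul_smul_comm, mul_rk2, hP0e t, rk2_zero_left, smul_zero]
      have hz2 : (∑ t : Fin r, ((lam t ^ n : ℝ) : 𝕜) • rk2 𝕜 (e t) (e t)) * P 0 = 0 := by
        rw [Finset.sum_mul]
        apply Finset.sum_eq_zero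
        intro t _
        rw [smul_mul_assoc, rk2_mul (P 0) (hsym 0), hP0e t, rk2_zero_right, smul_zero]
      have hz3 : (∑ t : Fin r, ((lam t ^ n : ℝ) : 𝕜) • rk2 𝕜 (e t) (e t)) *
          (∑ t : Fin r, ((lam t : ℝ) : 𝕜) • rk2 𝕜 (e t) (e t))
          = ∑ t : Fin r, ((lam t ^ (n+1) : ℝ) : 𝕜) • rk2 𝕜 (e t) (e t) := by
        rw [Finset.sum_mul]
        apply Finset.sum_congr rfl
        intro t _
        rw [Finset.mul_sum]
        rw [Finset.sum_eq_single t]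
        · rw [smul_mul_assoc, mul_smul_comm, rk2_mul_rk2, heK t, one_smul, smul_smul,
            ← RCLike.ofReal_mul, ← pow_succ]
        · intro u _ hut
          rw [smul_mul_assoc, mul_smul_comm, rk2_mul_rk2, hee t u (Ne.symm hut), zero_smul,
            smul_zero, smul_zero]
        · intro hnot
          exact absurd (Finset.mem_univ t) hnot
      rw [hz1, hz2, hz3]
      abel
  -- formula for P s
  have hPk : ∀ (k : ℕ) (hk : k < r + 1), P ⟨k, hk⟩
      = P 0 + ∑ t : Fin r, (if (t:ℕ) < k then rk2 𝕜 (e t) (e t) else 0) := by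
    intro k
    induction k with
    | zero =>
      intro hk
      have h0 : (⟨0, hk⟩ : Fin (r+1)) = 0 := rfl
      simp [h0]
    | succ k ih =>
      intro hk
      have hk' : k < r + 1 := by omega
      have hkr : k < r := by omega
      have hstep : P ⟨k+1, hk⟩ = P ⟨k, hk'⟩ + rk2 𝕜 (e ⟨k, hkr⟩) (e ⟨k, hkr⟩) := by
        have hsucc : (⟨k, hkr⟩ : Fin r).succ = ⟨k+1, hk⟩ := rfl
        have hcast : (⟨k, hkr⟩ : Fin r).castSucc = ⟨k, hk'⟩ := rfl
        have := heD ⟨k, hkr⟩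
        rw [hsucc, hcast] at this
        rw [← this]
        abel
      rw [hstep, ih hk']
      have hsum : ∑ t : Fin r, (if (t:ℕ) < k + 1 then rk2 𝕜 (e t) (e t) else 0)
          = (∑ t : Fin r, (if (t:ℕ) < k then rk2 𝕜 (e t) (e t) else 0))
            + rk2 𝕜 (e ⟨k, hkr⟩) (e ⟨k, hkr⟩) := by
        have hsplit : ∀ t : Fin r, (if (t:ℕ) < k + 1 then rk2 𝕜 (e t) (e t) else 0)
            = (if (t:ℕ) < k then rk2 𝕜 (e t) (e t) else 0)
              + (if t = ⟨k, hkr⟩ then rk2 𝕜 (e t) (e t) else 0) := by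
          intro t
          by_cases h1 : (t:ℕ) < k
          · rw [if_pos (by omega), if_pos h1, if_neg (by
              intro hc
              rw [Fin.ext_iff] at hc
              simp at hc
              omega), add_zero]
          · by_cases h2 : (t:ℕ) = k
            · rw [if_pos (by omega), if_neg h1, if_pos (by
                rw [Fin.ext_iff]
                simpa using h2), zero_add]
            · rw [if_neg (by omega), if_neg h1, if_neg (by
                intro hc
                rw [Fin.ext_iff] at hc
                simp at hc
                omega), add_zero]
        rw [Finset.sum_congr rfl (fun t _ => hsplit t), Finset.sum_add_distrib]
        congr 1
        rw [Finset.sum_ite_eq' Finset.univ (⟨k, hkr⟩ : Fin r) (fun t => rk2 𝕜 (e t) (e t))]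
        simp
      rw [hsum]
      abel
  have hPs : ∀ s : Fin (r+1), P s
      = P 0 + ∑ t : Fin r, (if (t:ℕ) < (s:ℕ) then rk2 𝕜 (e t) (e t) else 0) := by
    intro s
    have := hPk (s:ℕ) s.isLt
    rwa [Fin.eta] at this
  -- final estimate
  refine ⟨Q, m, hQproj, hm1, ?_⟩
  intro s
  rw [hpow (m s) (hm1 s), hPs s, add_sub_add_left_eq_sub, ← Finset.sum_sub_distrib]
  have hterm : ∀ t : Fin r,
      ((lam t ^ (m s) : ℝ) : 𝕜) • rk2 𝕜 (e t) (e t)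
        - (if (t:ℕ) < (s:ℕ) then rk2 𝕜 (e t) (e t) else 0)
      = (((lam t ^ (m s) - if (t:ℕ) < (s:ℕ) then (1:ℝ) else 0) : ℝ) : 𝕜) • rk2 𝕜 (e t) (e t) := by
    intro t
    by_cases h : (t:ℕ) < (s:ℕ)
    · rw [if_pos h, if_pos h, RCLike.ofReal_sub, sub_smul]
      norm_num
    · rw [if_neg h, if_neg h, sub_zero, sub_zero]
  rw [Finset.sum_congr rfl (fun t _ => hterm t)]
  have hbound : ∀ t : Fin r, t ∈ Finset.univ →
      ‖(((lam t ^ (m s) - if (t:ℕ) < (s:ℕ) then (1:ℝ) else 0) : ℝ) : 𝕜) • rk2 𝕜 (e t) (e t)‖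
        ≤ ε / (4 * (r + 1)) := by
    intro t _
    calc ‖(((lam t ^ (m s) - if (t:ℕ) < (s:ℕ) then (1:ℝ) else 0) : ℝ) : 𝕜)
          • rk2 𝕜 (e t) (e t)‖
        ≤ ‖(((lam t ^ (m s) - if (t:ℕ) < (s:ℕ) then (1:ℝ) else 0) : ℝ) : 𝕜)‖
            * ‖rk2 𝕜 (e t) (e t)‖ := ContinuousLinearMap.opNorm_smul_le _ _
      _ = |lam t ^ (m s) - if (t:ℕ) < (s:ℕ) then (1:ℝ) else 0| * ‖rk2 𝕜 (e t) (e t)‖ := by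
          rw [RCLike.norm_ofReal]
      _ ≤ |lam t ^ (m s) - if (t:ℕ) < (s:ℕ) then (1:ℝ) else 0| * 1 :=
          mul_le_mul_of_nonneg_left (norm_rk2_le_one (e t) (he1 t)) (abs_nonneg _)
      _ = |lam t ^ (m s) - if (t:ℕ) < (s:ℕ) then (1:ℝ) else 0| := mul_one _
      _ ≤ ε / (4 * (r + 1)) := hclose s t
  have hd : (0:ℝ) < ε / (4 * ((r:ℝ) + 1)) := by positivity
  calc ‖∑ t : Fin r,
      (((lam t ^ (m s) - if (t:ℕ) < (s:ℕ) then (1:ℝ) else 0) : ℝ) : 𝕜) • rk2 𝕜 (e t) (e t)‖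
      ≤ ∑ t : Fin r, ‖(((lam t ^ (m s) - if (t:ℕ) < (s:ℕ) then (1:ℝ) else 0) : ℝ) : 𝕜)
          • rk2 𝕜 (e t) (e t)‖ := norm_sum_le _ _
    _ ≤ ∑ _t : Fin r, ε / (4 * ((r:ℝ) + 1)) := Finset.sum_le_sum hbound
    _ = (r:ℝ) * (ε / (4 * ((r:ℝ) + 1))) := by
        rw [Finset.sum_const, Finset.card_univ, Fintype.card_fin, nsmul_eq_mul]
    _ < (4 * ((r:ℝ) + 1)) * (ε / (4 * ((r:ℝ) + 1))) := by
        apply mul_lt_mul_of_pos_right _ hd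
        linarith [Nat.cast_nonneg (α := ℝ) r]
    _ = ε := by
        field_simp
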